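/- arXiv:1704.06037 — 2 statements merged into one kernel-verified Lean document; each statement's English description precedes it below -/
import Mathlib

section
/- Let π be a profile and ≻₀ a preference such that Flexible Condition 1 holds for π and ≻₀. Then the top-ranked alternative of ≻₀ is a weak Condorcet winner of π: it weakly beats every other alternative in pairwise majority voting. -/
open Classical

/-- Inversion distance between two preference relations: the number of (ordered
representatives of) unordered pairs ranked oppositely. For strict total orders,
each oppositely-ranked unordered pair {x,y} is counted exactly once. -/
noncomputable def invDist {A : Type*} [Fintype A] (r r' : A → A → Prop) : ℕ :=
  {p : A × A | r p.1 p.2 ∧ r' p.2 p.1}.ncard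

/-- Frequency of a preference in a profile (list of preferences). -/
noncomputable def freq {A : Type*} (π : List (A → A → Prop)) (r : A → A → Prop) : ℕ :=
  {i : Fin π.length | π.get i = r}.ncard

/-- Number of voters in the profile ranking `a` above `b`. -/
noncomputable def votesFor {A : Type*} (π : List (A → A → Prop)) (a b : A) : ℕ :=
  {i : Fin π.length | π.get i a b}.ncard

/-- The preference obtained by swapping alternatives `a` and `b` in the ranking. -/
def swapPref {A : Type*} [DecidableEq A] (a b : A) (r : A → A → Prop) : A → A → Prop :=
  fun x y => r (Equiv.swap a b x) (Equiv.swap a b y)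

section Aux

variable {A : Type*} [DecidableEq A]

lemma swapPref_swapPref (a b : A) (r : A → A → Prop) :
    swapPref a b (swapPref a b r) = r := by
  funext x y; simp [swapPref]

lemma isSTO_swapPref (a b : A) (r : A → A → Prop)
    (hr : IsStrictTotalOrder A r) : IsStrictTotalOrder A (swapPref a b r) := by
  refine { trichotomous := fun x y => ?_,
           irrefl := fun x h => hr.irrefl _ h,
           trans := fun x y z h1 h2 => hr.trans _ _ _ h1 h2 }
  exact fun h1 h2 => (Equiv.swap a b).injective (hr.trichotomous _ _ h1 h2)

/-- Key combinatorial lemma: if `r` ranks `b` above `best` while `r0` has `best`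
on top, then swapping `best` and `b` in `r` strictly decreases the inversion
distance to `r0`. -/
lemma invDist_swap_lt [Fintype A] (r r0 : A → A → Prop)
    (hr : IsStrictTotalOrder A r) (hr0 : IsStrictTotalOrder A r0)
    (best b : A) (hne : b ≠ best)
    (hbest : ∀ y : A, y ≠ best → r0 best y) (hb : r b best) :
    invDist (swapPref best b r) r0 < invDist r r0 := by
  set s : A → A := fun x => Equiv.swap best b x with hsdef
  have hss : ∀ x, s (s x) = x := fun x => Equiv.swap_apply_self _ _ _
  have hsinj : Function.Injective s := fun x y h => (Equiv.swap best b).injective h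
  have hsb : s best = b := Equiv.swap_apply_left best b
  have hsbb : s b = best := Equiv.swap_apply_right best b
  have hso : ∀ x, x ≠ best → x ≠ b → s x = x := fun x h1 h2 => Equiv.swap_apply_of_ne_of_ne h1 h2
  have asym : ∀ {x y}, r x y → ¬ r y x := fun {x y} h1 h2 => hr.irrefl x (hr.trans _ _ _ h1 h2)
  have asym0 : ∀ {x y}, r0 x y → ¬ r0 y x := fun {x y} h1 h2 => hr0.irrefl x (hr0.trans _ _ _ h1 h2)
  set D' : Set (A × A) := {p : A × A | r p.1 p.2 ∧ r0 (s p.2) (s p.1)} with hD'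
  set D : Set (A × A) := {p : A × A | r p.1 p.2 ∧ r0 p.2 p.1} with hD
  -- Step A : invDist (swapPref best b r) r0 = D'.ncard
  have hinj : Function.Injective (fun p : A × A => (s p.1, s p.2)) := by
    intro p q h
    simp only [Prod.mk.injEq] at h
    exact Prod.ext (hsinj h.1) (hsinj h.2)
  have himg : (fun p : A × A => (s p.1, s p.2)) ''
      {p : A × A | r (s p.1) (s p.2) ∧ r0 p.2 p.1} = D' := by
    ext p
    constructor
    · rintro ⟨q, ⟨h1, h2⟩, rfl⟩
      exact ⟨h1, by rw [hss, hss]; exact h2⟩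
    · rintro ⟨h1, h2⟩
      exact ⟨(s p.1, s p.2), ⟨by rw [hss, hss]; exact h1, h2⟩,
        Prod.ext (hss p.1) (hss p.2)⟩
  have hstepA : invDist (swapPref best b r) r0 = D'.ncard := by
    rw [invDist, ← himg, Set.ncard_image_of_injective _ hinj]
    rfl
  -- basic facts about members of D'
  have hfst : ∀ p : A × A, p ∈ D' → p.1 ≠ b := by
    rintro ⟨u, v⟩ ⟨h1, h2⟩ h
    simp only at h1 h2 h
    rw [h, hsbb] at h2
    by_cases hv : s v = best
    · rw [hv] at h2; exact hr0.irrefl best h2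
    · exact asym0 (hbest (s v) hv) h2
  -- the injection from D' into D \ {(b, best)}
  set f : A × A → A × A := fun p =>
    if p.1 = best then (b, p.2)
    else if p.2 = b then (p.1, best)
    else if p.2 = best ∧ r p.1 b then (p.1, b)
    else p with hf
  have hmaps : ∀ p ∈ D', f p ∈ D \ {(b, best)} := by
    rintro ⟨u, v⟩ hp
    obtain ⟨h1, h2⟩ := hp
    simp only at h1 h2
    by_cases hu : u = best
    · have h1' : r best v := hu ▸ h1
      have hvbest : v ≠ best := fun h => hr.irrefl best (h ▸ h1')
      have hvb : v ≠ b := fun h => asym hb (h ▸ h1')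
      rw [hu, hsb, hso v hvbest hvb] at h2
      have hfval : f (u, v) = (b, v) := by simp [hf, hu]
      rw [hfval]
      exact ⟨⟨hr.trans _ _ _ hb h1', h2⟩, by simp [hvbest]⟩
    · have hub : u ≠ b := hfst (u, v) ⟨h1, h2⟩
      by_cases hv : v = b
      · have h1' : r u b := hv ▸ h1
        have hfval : f (u, v) = (u, best) := by simp [hf, hu, hv]
        rw [hfval]
        exact ⟨⟨hr.trans _ _ _ h1' hb, hbest u hu⟩, by simp [hub]⟩
      · by_cases hc : v = best ∧ r u b
        · obtain ⟨hvbest, hrub⟩ := hc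
          rw [hvbest, hsb, hso u hu hub] at h2
          have hfval : f (u, v) = (u, b) := by simp [hf, hu, hvbest, hne.symm, hrub]
          rw [hfval]
          exact ⟨⟨hrub, h2⟩, by simp [hne]⟩
        · have hfval : f (u, v) = (u, v) := by simp [hf, hu, hv, hc]
          rw [hfval]
          refine ⟨⟨h1, ?_⟩, by simp [hub]⟩
          by_cases hvbest : v = best
          · rw [hvbest]; exact hbest u hu
          · rw [hso v hvbest hv, hso u hu hub] at h2; exact h2
  -- a left inverse of f on D'
  set g : A × A → A × A := fun q =>
    if q.1 = b then (best, q.2)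
    else if q.2 = best ∧ r q.1 b then (q.1, b)
    else if q.2 = b then (q.1, best)
    else q with hg
  have hgf : ∀ p ∈ D', g (f p) = p := by
    rintro ⟨u, v⟩ hp
    obtain ⟨h1, h2⟩ := hp
    simp only at h1 h2
    have hub : u ≠ b := hfst (u, v) ⟨h1, h2⟩
    by_cases hu : u = best
    · have hfval : f (u, v) = (b, v) := by simp [hf, hu]
      rw [hfval]; simp [hg, hu]
    · by_cases hv : v = b
      · have h1' : r u b := hv ▸ h1
        have hfval : f (u, v) = (u, best) := by simp [hf, hu, hv]
        rw [hfval]; simp [hg, hub, h1', hv]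
      · by_cases hc : v = best ∧ r u b
        · obtain ⟨hvbest, hrub⟩ := hc
          have hfval : f (u, v) = (u, b) := by simp [hf, hu, hvbest, hne.symm, hrub]
          rw [hfval]; simp [hg, hub, hne, hvbest]
        · have hfval : f (u, v) = (u, v) := by simp [hf, hu, hv, hc]
          rw [hfval]; simp [hg, hub, hv, hc]
  have hinjOn : Set.InjOn f D' := by
    intro p hp q hq h
    rw [← hgf p hp, ← hgf q hq, h]
  have hDmem : (b, best) ∈ D := ⟨hb, hbest b hne⟩
  calc invDist (swapPref best b r) r0 = D'.ncard := hstepA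
    _ ≤ (D \ {(b, best)}).ncard :=
        Set.ncard_le_ncard_of_injOn f hmaps hinjOn (Set.toFinite _)
    _ < D.ncard := Set.ncard_diff_singleton_lt_of_mem hDmem (Set.toFinite _)
    _ = invDist r r0 := rfl

end Aux

lemma ncard_setOf_fin (n : ℕ) (p : Fin n → Prop) :
    {i : Fin n | p i}.ncard = (Finset.univ.filter p).card := by
  rw [← Set.ncard_coe_finset]
  congr 1
  ext i
  simp

/-- Under Flexible Condition 1, the top-ranked alternative of `≻₀` is a weak
Condorcet winner. -/
theorem flexible_best_is_weak_condorcet {A : Type*} [Fintype A]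
    (hK : 3 ≤ Fintype.card A)
    (π : List (A → A → Prop)) (hπ : ∀ r ∈ π, IsStrictTotalOrder A r)
    (r0 : A → A → Prop) (hr0 : IsStrictTotalOrder A r0)
    (hflex : ∀ r' r : A → A → Prop, IsStrictTotalOrder A r' → IsStrictTotalOrder A r →
      freq π r' > freq π r → invDist r' r0 ≤ invDist r r0)
    (best : A) (hbest : ∀ y : A, y ≠ best → r0 best y) :
    ∀ b : A, b ≠ best → votesFor π b best ≤ votesFor π best b := by
  classical
  intro b hb
  have hswapswap : ∀ r : A → A → Prop, swapPref best b (swapPref best b r) = r :=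
    fun r => swapPref_swapPref best b r
  -- the key per-relation inequality
  have key : ∀ r : A → A → Prop, IsStrictTotalOrder A r → r b best →
      freq π r ≤ freq π (swapPref best b r) := by
    intro r hrsto hrb
    by_contra hlt
    push_neg at hlt
    have hsto' : IsStrictTotalOrder A (swapPref best b r) := isSTO_swapPref best b r hrsto
    have h1 : invDist r r0 ≤ invDist (swapPref best b r) r0 :=
      hflex r (swapPref best b r) hrsto hsto' hlt
    have h2 : invDist (swapPref best b r) r0 < invDist r r0 :=
      invDist_swap_lt r r0 hrsto hr0 best b hb hbest hrb
    omega
  have hσinj : Function.Injective (swapPref best b (A := A)) := by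
    intro r r' h
    have h2 := congrArg (swapPref best b) h
    rwa [hswapswap r, hswapswap r'] at h2
  set R : Finset (A → A → Prop) := π.toFinset ∪ π.toFinset.image (swapPref best b) with hR
  have hRmem : ∀ i : Fin π.length, π.get i ∈ R := by
    intro i
    exact Finset.mem_union_left _ (List.mem_toFinset.2 (π.get_mem i))
  have hRsto : ∀ r ∈ R, IsStrictTotalOrder A r := by
    intro r hr
    rcases Finset.mem_union.1 hr with h | h
    · exact hπ r (List.mem_toFinset.1 h)
    · obtain ⟨r', hr', rfl⟩ := Finset.mem_image.1 h
      exact isSTO_swapPref best b r' (hπ r' (List.mem_toFinset.1 hr'))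
  have hRσ : ∀ r ∈ R, swapPref best b r ∈ R := by
    intro r hr
    rcases Finset.mem_union.1 hr with h | h
    · exact Finset.mem_union_right _ (Finset.mem_image_of_mem _ h)
    · obtain ⟨r', hr', rfl⟩ := Finset.mem_image.1 h
      rw [hswapswap r']
      exact Finset.mem_union_left _ hr'
  have hvotes : ∀ a c : A, votesFor π a c
      = ∑ r ∈ R.filter (fun r => r a c), freq π r := by
    intro a c
    rw [votesFor, ncard_setOf_fin]
    rw [Finset.card_eq_sum_card_fiberwise (f := π.get) (t := R)
      (fun i _ => hRmem i)]
    rw [Finset.sum_filter]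
    apply Finset.sum_congr rfl
    intro r _
    by_cases h : r a c
    · rw [if_pos h, freq, ncard_setOf_fin]
      refine congrArg Finset.card ?_
      ext i
      simp only [Finset.mem_filter, Finset.mem_univ, true_and]
      exact ⟨fun h2 => h2.2, fun h2 => ⟨by rw [h2]; exact h, h2⟩⟩
    · rw [if_neg h]
      rw [Finset.card_eq_zero]
      ext i
      simp only [Finset.mem_filter, Finset.mem_univ, true_and, Finset.notMem_empty,
        iff_false, not_and]
      intro h1 h2
      rw [h2] at h1
      exact h h1
  rw [hvotes b best, hvotes best b]
  have hsb : ∀ r : A → A → Prop, swapPref best b r best b ↔ r b best := by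
    intro r
    simp [swapPref]
  calc ∑ r ∈ R.filter (fun r => r b best), freq π r
      ≤ ∑ r ∈ R.filter (fun r => r b best), freq π (swapPref best b r) := by
        apply Finset.sum_le_sum
        intro r hr
        obtain ⟨hrR, hrb⟩ := Finset.mem_filter.1 hr
        exact key r (hRsto r hrR) hrb
    _ = ∑ r ∈ (R.filter (fun r => r b best)).image (swapPref best b), freq π r := by
        rw [Finset.sum_image (fun x _ y _ h => hσinj h)]
    _ ≤ ∑ r ∈ R.filter (fun r => r best b), freq π r := by
        apply Finset.sum_le_sum_of_subset
        intro r' hr'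
        obtain ⟨r, hr, rfl⟩ := Finset.mem_image.1 hr'
        obtain ⟨hrR, hrb⟩ := Finset.mem_filter.1 hr
        exact Finset.mem_filter.2 ⟨hRσ r hrR, (hsb r).2 hrb⟩
end

section
/- Let π be a profile with an odd number of voters and suppose Flexible Condition 1 holds for π with respect to preferences ≻₀ and ≻₁. Then ≻₀ = ≻₁ (the preference around which there is Flexible Consensus is unique for odd n). -/
open Classical

section Aux

variable {A : Type*}

lemma sto_asymm {r : A → A → Prop} (h : IsStrictTotalOrder A r) {x y : A}
    (hxy : r x y) : ¬ r y x := fun hyx => h.irrefl x (h.trans _ _ _ hxy hyx)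

lemma sto_total {r : A → A → Prop} (h : IsStrictTotalOrder A r) {x y : A}
    (hxy : x ≠ y) : r x y ∨ r y x := by
  have h3 : r x y ∨ x = y ∨ r y x := by
    by_cases h1 : r x y
    · exact Or.inl h1
    by_cases h2 : r y x
    · exact Or.inr (Or.inr h2)
    exact Or.inr (Or.inl (h.trichotomous x y h1 h2))
  rcases h3 with h1 | h1 | h1
  · exact Or.inl h1
  · exact absurd h1 hxy
  · exact Or.inr h1

lemma swapPref_invol [DecidableEq A] (a b : A) (r : A → A → Prop) :
    swapPref a b (swapPref a b r) = r := by
  funext x y; simp [swapPref]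

lemma swapPref_sto {A : Type*} [DecidableEq A] {r : A → A → Prop} (h : IsStrictTotalOrder A r)
    (a b : A) : IsStrictTotalOrder A (swapPref a b r) := by
  exact
    { trichotomous := by
        intro x y h1 h2
        exact (Equiv.swap a b).injective (h.trichotomous _ _ h1 h2)
      irrefl := fun x => h.irrefl _
      trans := fun x y z => h.trans _ _ _ }

lemma swapPref_apply_ba [DecidableEq A] (a b : A) (r : A → A → Prop) :
    swapPref a b r b a ↔ r a b := by
  simp [swapPref]

/-- Core combinatorial lemma: swapping `a` and `b` in `r` strictly decreases the
inversion distance to `s` whenever `r a b` and `s b a`. -/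
lemma invDist_swap_lt_s10 [Fintype A] [DecidableEq A] {r s : A → A → Prop}
    (hr : IsStrictTotalOrder A r) (hs : IsStrictTotalOrder A s)
    {a b : A} (hab : r a b) (hba : s b a) :
    invDist (swapPref a b r) s < invDist r s := by
  classical
  have hne : a ≠ b := fun h => hr.irrefl a (h ▸ hab)
  set D : Set (A × A) := {p : A × A | r p.1 p.2 ∧ s p.2 p.1} with hD
  set Dσ : Set (A × A) := {p : A × A | swapPref a b r p.1 p.2 ∧ s p.2 p.1} with hDσ
  set h : A × A → A × A := fun p =>
    if p.1 = b ∧ p.2 ≠ a ∧ p.2 ≠ b then (if r b p.2 ∧ s p.2 a then p else (a, p.2))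
    else if p.2 = a ∧ p.1 ≠ a ∧ p.1 ≠ b then (if r p.1 a ∧ s b p.1 then p else (p.1, b))
    else p with hh
  set g : A × A → A × A := fun o =>
    if o.1 = a ∧ o.2 ≠ a ∧ o.2 ≠ b ∧ ¬(r b o.2 ∧ s o.2 a) then (b, o.2)
    else if o.2 = b ∧ o.1 ≠ a ∧ o.1 ≠ b ∧ ¬(r o.1 a ∧ s b o.1) then (o.1, a)
    else o with hg
  have rtrans : ∀ {x y z : A}, r x y → r y z → r x z := fun h1 h2 => hr.trans _ _ _ h1 h2
  have strans : ∀ {x y z : A}, s x y → s y z → s x z := fun h1 h2 => hs.trans _ _ _ h1 h2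
  have key : ∀ p ∈ Dσ, (h p ∈ D ∧ h p ≠ (a, b)) ∧ g (h p) = p := by
    rintro ⟨x, y⟩ hp
    simp only [hDσ, Set.mem_setOf_eq] at hp
    obtain ⟨h1, h2⟩ := hp
    by_cases hxa : x = a <;> by_cases hxb : x = b <;>
      by_cases hya : y = a <;> by_cases hyb : y = b
    all_goals first
      | (rw [hxa] at hxb; exact absurd hxb hne)
      | (rw [hya] at hyb; exact absurd hyb hne)
      | skip
    -- x = a, y = a
    · rw [hxa, hya] at h2; exact absurd h2 (hs.irrefl a)
    -- x = a, y = b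
    · rw [hxa, hyb] at h1
      simp only [swapPref, Equiv.swap_apply_left, Equiv.swap_apply_right] at h1
      exact absurd h1 (sto_asymm hr hab)
    -- x = a, y = c
    · rw [hxa] at h1 h2 ⊢
      have h1' : r b y := by
        simpa [swapPref, Equiv.swap_apply_left, Equiv.swap_apply_of_ne_of_ne hya hyb] using h1
      have hhp : h (a, y) = (a, y) := by
        simp only [hh]
        rw [if_neg (by simp [hne]), if_neg (by simp [hya])]
      rw [hhp]
      refine ⟨⟨⟨rtrans hab h1', h2⟩, by simp [hyb]⟩, ?_⟩
      simp only [hg]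
      rw [if_neg (by simp [hya, hyb, h1', h2]), if_neg (by simp [hyb])]
    -- x = b, y = a
    · rw [hxb, hya] at h2; exact absurd h2 (sto_asymm hs hba)
    -- x = b, y = b
    · rw [hxb, hyb] at h2; exact absurd h2 (hs.irrefl b)
    -- x = b, y = c
    · rw [hxb] at h1 h2 ⊢
      have h1' : r a y := by
        simpa [swapPref, Equiv.swap_apply_left, Equiv.swap_apply_right,
          Equiv.swap_apply_of_ne_of_ne hya hyb] using h1
      by_cases ht : r b y ∧ s y a
      · have hhp : h (b, y) = (b, y) := by
          simp only [hh]
          rw [if_pos (by simp [hya, hyb]), if_pos ht]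
        rw [hhp]
        refine ⟨⟨⟨ht.1, h2⟩, fun hc => hne (congrArg Prod.fst hc).symm⟩, ?_⟩
        simp only [hg]
        rw [if_neg (fun hc => hne hc.1.symm), if_neg (fun hc => hyb hc.1)]
      · have hhp : h (b, y) = (a, y) := by
          simp only [hh]
          rw [if_pos (by simp [hya, hyb]), if_neg ht]
        rw [hhp]
        refine ⟨⟨⟨h1', strans h2 hba⟩, by simp [hyb]⟩, ?_⟩
        simp only [hg]
        rw [if_pos (by simp [hya, hyb, ht])]
    -- x = c, y = a
    · rw [hya] at h1 h2 ⊢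
      have h1' : r x b := by
        simpa [swapPref, Equiv.swap_apply_left, Equiv.swap_apply_of_ne_of_ne hxa hxb] using h1
      by_cases ht : r x a ∧ s b x
      · have hhp : h (x, a) = (x, a) := by
          simp only [hh]
          rw [if_neg (by simp [hxb, hne]), if_pos (by simp [hxa, hxb]), if_pos ht]
        rw [hhp]
        refine ⟨⟨⟨ht.1, h2⟩, by simp [hxa]⟩, ?_⟩
        simp only [hg]
        rw [if_neg (by simp [hxa]), if_neg (by simp [hne])]
      · have hhp : h (x, a) = (x, b) := by
          simp only [hh]
          rw [if_neg (by simp [hxb, hne]), if_pos (by simp [hxa, hxb]), if_neg ht]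
        rw [hhp]
        refine ⟨⟨⟨h1', strans hba h2⟩, by simp [hxa]⟩, ?_⟩
        simp only [hg]
        rw [if_neg (by simp [hxa]), if_pos (by simp [hxa, hxb, ht])]
    -- x = c, y = b
    · rw [hyb] at h1 h2 ⊢
      have h1' : r x a := by
        simpa [swapPref, Equiv.swap_apply_right, Equiv.swap_apply_of_ne_of_ne hxa hxb] using h1
      have hhp : h (x, b) = (x, b) := by
        simp only [hh]
        rw [if_neg (by simp [hxb]), if_neg (by simp [hne.symm])]
      rw [hhp]
      refine ⟨⟨⟨rtrans h1' hab, h2⟩, by simp [hxa]⟩, ?_⟩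
      simp only [hg]
      rw [if_neg (by simp [hxa]), if_neg (by simp [hxa, hxb, h1', h2])]
    -- x = c, y = d
    · have h1' : r x y := by
        simpa [swapPref, Equiv.swap_apply_of_ne_of_ne hxa hxb,
          Equiv.swap_apply_of_ne_of_ne hya hyb] using h1
      have hhp : h (x, y) = (x, y) := by
        simp only [hh]
        rw [if_neg (by simp [hxb]), if_neg (by simp [hya])]
      rw [hhp]
      refine ⟨⟨⟨h1', h2⟩, by simp [hxa]⟩, ?_⟩
      simp only [hg]
      rw [if_neg (by simp [hxa]), if_neg (by simp [hxa, hxb, hyb])]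
  have hinj : Set.InjOn h Dσ := by
    intro p hp q hq he
    have hp' := (key p hp).2
    have hq' := (key q hq).2
    rw [← hp', ← hq', he]
  have himg : h '' Dσ ⊆ D \ {(a, b)} := by
    rintro o ⟨p, hp, rfl⟩
    exact ⟨(key p hp).1.1, (key p hp).1.2⟩
  have hcard1 : Dσ.ncard = (h '' Dσ).ncard := (Set.ncard_image_of_injOn hinj).symm
  have hcard2 : (h '' Dσ).ncard ≤ (D \ {(a, b)}).ncard :=
    Set.ncard_le_ncard himg (Set.toFinite _)
  have hmem : (a, b) ∈ D := ⟨hab, hba⟩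
  have hcard3 : (D \ {(a, b)}).ncard < D.ncard :=
    Set.ncard_diff_singleton_lt_of_mem hmem (Set.toFinite _)
  calc invDist (swapPref a b r) s = Dσ.ncard := rfl
    _ = (h '' Dσ).ncard := hcard1
    _ ≤ (D \ {(a, b)}).ncard := hcard2
    _ < D.ncard := hcard3

lemma freq_eq_card (π : List (A → A → Prop)) (r : A → A → Prop) :
    freq π r = (Finset.univ.filter (fun i : Fin π.length => π.get i = r)).card := by
  rw [freq, ← Set.ncard_coe_finset]
  congr 1
  ext i
  simp

lemma votesFor_eq_card (π : List (A → A → Prop)) (a b : A) :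
    votesFor π a b = (Finset.univ.filter (fun i : Fin π.length => π.get i a b)).card := by
  rw [votesFor, ← Set.ncard_coe_finset]
  congr 1
  ext i
  simp

lemma votes_sum [Fintype A] (π : List (A → A → Prop))
    (hπ : ∀ r ∈ π, IsStrictTotalOrder A r) {a b : A} (hab : a ≠ b) :
    votesFor π a b + votesFor π b a = π.length := by
  rw [votesFor, votesFor]
  have hcompl : {i : Fin π.length | π.get i b a} = {i : Fin π.length | π.get i a b}ᶜ := by
    ext i
    have hsto := hπ (π.get i) (List.get_mem π _)
    simp only [Set.mem_setOf_eq, Set.mem_compl_iff]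
    constructor
    · exact fun h => sto_asymm hsto h
    · intro h
      rcases sto_total hsto hab with h1 | h1
      · exact absurd h1 h
      · exact h1
  rw [hcompl, Set.ncard_add_ncard_compl]
  simp [Nat.card_eq_fintype_card]

/-- Pigeonhole: if strictly more voters rank `a` above `b` than the reverse, then some
preference in the profile ranking `a` above `b` is strictly more frequent than its
`a`-`b` swap. -/
lemma exists_heavy [DecidableEq A] (π : List (A → A → Prop))
    {a b : A} (hv : votesFor π b a < votesFor π a b) :
    ∃ q ∈ π, q a b ∧ freq π (swapPref a b q) < freq π q := by
  classical
  by_contra hcon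
  push_neg at hcon
  set S := Finset.univ.filter (fun i : Fin π.length => π.get i a b) with hS
  set T := Finset.univ.filter (fun i : Fin π.length => π.get i b a) with hT
  set R := S.image π.get with hR
  have hRab : ∀ q ∈ R, q a b := by
    intro q hq
    obtain ⟨j, hj, rfl⟩ := Finset.mem_image.mp hq
    exact (Finset.mem_filter.mp hj).2
  have step1 : S.card = ∑ q ∈ R, freq π q := by
    rw [Finset.card_eq_sum_card_fiberwise (f := π.get) (t := R)
      (fun x hx => Finset.mem_image_of_mem _ hx)]
    refine Finset.sum_congr rfl (fun q hq => ?_)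
    rw [freq_eq_card]
    congr 1
    ext i
    simp only [hS, Finset.mem_filter, Finset.mem_univ, true_and]
    constructor
    · exact fun h => h.2
    · intro h
      exact ⟨h ▸ hRab q hq, h⟩
  have step2 : ∑ q ∈ R, freq π q ≤ ∑ q ∈ R, freq π (swapPref a b q) := by
    refine Finset.sum_le_sum (fun q hq => ?_)
    obtain ⟨j, hj, rfl⟩ := Finset.mem_image.mp hq
    exact hcon _ (List.get_mem π _) (hRab _ hq)
  have hswapinj : ∀ x ∈ R, ∀ y ∈ R, swapPref a b x = swapPref a b y → x = y := by
    intro x _ y _ hxy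
    have := congrArg (swapPref a b) hxy
    rwa [swapPref_invol, swapPref_invol] at this
  have step3 : ∑ q ∈ R, freq π (swapPref a b q) = ∑ q ∈ R.image (swapPref a b), freq π q :=
    (Finset.sum_image hswapinj).symm
  have step4 : ∑ q ∈ R.image (swapPref a b), freq π q ≤ T.card := by
    have heq : ∀ q, freq π q =
        (Finset.univ.filter (fun i : Fin π.length => π.get i = q)).card := fun q =>
      freq_eq_card π q
    calc ∑ q ∈ R.image (swapPref a b), freq π q
        = ∑ q ∈ R.image (swapPref a b),
            (Finset.univ.filter (fun i : Fin π.length => π.get i = q)).card :=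
          Finset.sum_congr rfl (fun q _ => heq q)
      _ = ((R.image (swapPref a b)).biUnion
            (fun q => Finset.univ.filter (fun i : Fin π.length => π.get i = q))).card := by
          rw [Finset.card_biUnion]
          intro x _ y _ hxy
          simp only [Finset.disjoint_left, Finset.mem_filter, Finset.mem_univ, true_and]
          intro i hix hiy
          exact hxy (hix ▸ hiy ▸ rfl)
      _ ≤ T.card := by
          apply Finset.card_le_card
          intro i hi
          simp only [Finset.mem_biUnion, Finset.mem_filter, Finset.mem_univ, true_and] at hi
          obtain ⟨q, hq, hiq⟩ := hi
          obtain ⟨q', hq', rfl⟩ := Finset.mem_image.mp hq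
          simp only [hT, Finset.mem_filter, Finset.mem_univ, true_and]
          rw [hiq]
          exact (swapPref_apply_ba a b q').mpr (hRab q' hq')
  have : votesFor π a b ≤ votesFor π b a := by
    rw [votesFor_eq_card, votesFor_eq_card]
    calc (Finset.univ.filter (fun i : Fin π.length => π.get i a b)).card
        = S.card := rfl
      _ = ∑ q ∈ R, freq π q := step1
      _ ≤ ∑ q ∈ R, freq π (swapPref a b q) := step2
      _ = ∑ q ∈ R.image (swapPref a b), freq π q := step3
      _ ≤ T.card := step4
  omega

end Aux

/-- With an odd number of voters, the preference around which there is Flexible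
Consensus is unique. -/
theorem flexible_odd_unique {A : Type*} [Fintype A]
    (hK : 3 ≤ Fintype.card A)
    (π : List (A → A → Prop)) (hπ : ∀ r ∈ π, IsStrictTotalOrder A r)
    (hodd : Odd π.length)
    (r0 r1 : A → A → Prop) (hr0 : IsStrictTotalOrder A r0) (hr1 : IsStrictTotalOrder A r1)
    (hflex0 : ∀ r' r : A → A → Prop, IsStrictTotalOrder A r' → IsStrictTotalOrder A r →
      freq π r' > freq π r → invDist r' r0 ≤ invDist r r0)
    (hflex1 : ∀ r' r : A → A → Prop, IsStrictTotalOrder A r' → IsStrictTotalOrder A r →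
      freq π r' > freq π r → invDist r' r1 ≤ invDist r r1) :
    r0 = r1 := by
  classical
  by_contra hne01
  have hexab : ∃ a b, r0 a b ∧ r1 b a := by
    have : ∃ x y, ¬ (r0 x y ↔ r1 x y) := by
      by_contra hc
      push_neg at hc
      exact hne01 (funext fun x => funext fun y => propext (hc x y))
    obtain ⟨x, y, hxy⟩ := this
    have hxny : x ≠ y := by
      rintro rfl
      exact hxy (by constructor <;> (intro h; exact absurd h (by
        first | exact hr0.irrefl x | exact hr1.irrefl x)))
    by_cases h0 : r0 x y
    · refine ⟨x, y, h0, ?_⟩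
      have h1 : ¬ r1 x y := fun h => hxy ⟨fun _ => h, fun _ => h0⟩
      rcases sto_total hr1 hxny with h2 | h2
      · exact absurd h2 h1
      · exact h2
    · have h1 : r1 x y := by
        by_contra h1
        exact hxy ⟨fun h => absurd h h0, fun h => absurd h h1⟩
      refine ⟨y, x, ?_, h1⟩
      rcases sto_total hr0 hxny.symm with h2 | h2
      · exact h2
      · exact absurd h2 h0
  obtain ⟨a, b, h0ab, h1ba⟩ := hexab
  have hab : a ≠ b := fun h => hr0.irrefl a (h ▸ h0ab)
  have hsum := votes_sum π hπ hab
  rcases lt_trichotomy (votesFor π a b) (votesFor π b a) with hv | hv | hv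
  · -- more voters rank b above a : contradict flexibility around r0 using pair (b,a)
    obtain ⟨q, hqπ, hqba, hfq⟩ := exists_heavy π (a := b) (b := a) hv
    have hqsto := hπ q hqπ
    have hle := hflex0 q (swapPref b a q) hqsto (swapPref_sto hqsto b a) hfq
    have hlt := invDist_swap_lt_s10 hqsto hr0 hqba h0ab
    exact absurd hle (not_le.mpr hlt)
  · obtain ⟨k, hk⟩ := hodd
    omega
  · obtain ⟨q, hqπ, hqab, hfq⟩ := exists_heavy π (a := a) (b := b) hv
    have hqsto := hπ q hqπ
    have hle := hflex1 q (swapPref a b q) hqsto (swapPref_sto hqsto a b) hfq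
    have hlt := invDist_swap_lt_s10 hqsto hr1 hqab h1ba
    exact absurd hle (not_le.mpr hlt)
end
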